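/- Let R be a commutative ring, I an ideal of R contained in the Jacobson radical, and M a finitely generated projective R-module of constant rank r (i.e. M_𝔭 is free of rank r over R_𝔭 for every prime 𝔭). If M/IM is a free R/I-module of rank r, then M is a free R-module of rank r. -/

import Mathlib

/-- Let `R` be a commutative ring, `I` an ideal contained in the Jacobson radical, and `M` a
finitely generated projective `R`-module of constant rank `r` (its localization at every
prime is free of rank `r`).  If `M/IM` is free of rank `r` over `R/I`, then `M` is free of
rank `r` over `R`. -/
theorem stmt6 {R M : Type*} [CommRing R] [AddCommGroup M] [Module R M]
    (I : Ideal R) (hI : I ≤ (⊥ : Ideal R).jacobson)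
    [Module.Finite R M] [Module.Projective R M] (r : ℕ)
    (hrank : ∀ (𝔭 : Ideal R) [𝔭.IsPrime],
      Nonempty (Module.Basis (Fin r) (Localization.AtPrime 𝔭) (LocalizedModule 𝔭.primeCompl M)))
    (hfree : Nonempty (Module.Basis (Fin r) (R ⧸ I) (M ⧸ (I • ⊤ : Submodule R M)))) :
    Nonempty (Module.Basis (Fin r) R M) := by
  classical
  obtain ⟨b⟩ := hfree
  choose x hx using fun i => Submodule.Quotient.mk_surjective (I • ⊤ : Submodule R M) (b i)
  -- the lifted elements span `M` by Nakayama
  have hspan : Submodule.span R (Set.range x) = ⊤ := by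
    have hmap : Submodule.map (I • ⊤ : Submodule R M).mkQ (Submodule.span R (Set.range x)) = ⊤ := by
      rw [Submodule.map_span]
      have hcmp : ⇑(I • ⊤ : Submodule R M).mkQ ∘ x = ⇑b := by
        funext i
        simpa using hx i
      have himg : ⇑(I • ⊤ : Submodule R M).mkQ '' Set.range x = Set.range b := by
        rw [← Set.range_comp, hcmp]
      rw [himg, ← Submodule.restrictScalars_span R (R ⧸ I) Ideal.Quotient.mk_surjective,
        b.span_eq, Submodule.restrictScalars_top]
    have hsup : Submodule.span R (Set.range x) ⊔ (I • ⊤ : Submodule R M) = ⊤ := by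
      have := congrArg (Submodule.comap (I • ⊤ : Submodule R M).mkQ) hmap
      rwa [Submodule.comap_map_mkQ, Submodule.comap_top, sup_comm] at this
    refine top_le_iff.mp ?_
    refine Submodule.le_of_le_smul_of_le_jacobson_bot (Module.finite_def.mp ‹_›) hI ?_
    rw [hsup]
  -- the associated linear map from `Fin r → R` is surjective
  set f : (Fin r → R) →ₗ[R] M := Fintype.linearCombination R x with hf
  have hsurj : Function.Surjective f := by
    rw [← LinearMap.range_eq_top, hf, Fintype.range_linearCombination, hspan]
  -- it is injective since it is injective at every localization
  have hinj : Function.Injective f := by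
    apply injective_of_localized_maximal
    intro J hJ
    set g := LocalizedModule.map J.primeCompl f with hg
    have hgs : Function.Surjective g := by
      intro y
      induction' y using LocalizedModule.induction_on with m s
      obtain ⟨m', rfl⟩ := hsurj m
      exact ⟨LocalizedModule.mk m' s, by simp [hg]⟩
    let bs : Module.Basis (Fin r) (Localization.AtPrime J) (LocalizedModule J.primeCompl (Fin r → R)) :=
      (Pi.basisFun R (Fin r)).ofIsLocalizedModule (Localization.AtPrime J) J.primeCompl
        (LocalizedModule.mkLinearMap J.primeCompl (Fin r → R))
    obtain ⟨bt⟩ := hrank J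
    let e : LocalizedModule J.primeCompl M ≃ₗ[Localization.AtPrime J]
        LocalizedModule J.primeCompl (Fin r → R) := bt.equiv bs (Equiv.refl _)
    haveI : Module.Finite (Localization.AtPrime J)
        (LocalizedModule J.primeCompl (Fin r → R)) := Module.Finite.of_basis bs
    have hcomp : Function.Surjective (e.toLinearMap ∘ₗ g) := e.surjective.comp hgs
    have hci := OrzechProperty.injective_of_surjective_endomorphism (e.toLinearMap ∘ₗ g) hcomp
    exact Function.Injective.of_comp (f := e) (by exact hci)
  exact ⟨(Pi.basisFun R (Fin r)).map (LinearEquiv.ofBijective f ⟨hinj, hsurj⟩)⟩
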